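/- The first-order rogue wave φ₁(x,t) = e^{2it}·(1 − 4(1+4it)/(1 + 4(x − 1/2 − 6vt)² + 16t²)) satisfies the Hirota equation i·φ_t + φ_{xx} + 2|φ|²φ + i·v·φ_{xxx} + 6i·v·|φ|²·φ_x = 0 for every real v. -/

import Mathlib

open Complex
set_option maxHeartbeats 3200000
set_option maxRecDepth 8000

noncomputable def dx (φ : ℝ → ℝ → ℂ) : ℝ → ℝ → ℂ := fun x t => deriv (fun y => φ y t) x
noncomputable def dt (φ : ℝ → ℝ → ℂ) : ℝ → ℝ → ℂ := fun x t => deriv (fun s => φ x s) t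

/-- The first-order rogue wave of the Hirota equation. -/
noncomputable def φ₁ (v : ℝ) : ℝ → ℝ → ℂ := fun x t =>
  Complex.exp (2 * I * t) *
    (1 - 4 * (1 + 4 * I * t) / (1 + 4 * ((x : ℂ) - 1/2 - 6 * v * t)^2 + 16 * t^2))

lemma Dne (v x t : ℝ) : (1 + 4*((x:ℂ) - 1/2 - 6*v*t)^2 + 16*(t:ℂ)^2) ≠ 0 := by
  have h : (1 + 4*((x:ℂ) - 1/2 - 6*v*t)^2 + 16*(t:ℂ)^2)
      = ((1 + 4*(x - 1/2 - 6*v*t)^2 + 16*t^2 : ℝ) : ℂ) := by push_cast; ring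
  rw [h]
  exact_mod_cast (by positivity : (1 + 4*(x - 1/2 - 6*v*t)^2 + 16*t^2 : ℝ) ≠ 0)

lemma hP (v t : ℝ) (z : ℂ) :
    HasDerivAt (fun z : ℂ => 1 + 4*(z - 1/2 - 6*(v:ℂ)*t)^2 + 16*(t:ℂ)^2)
      (8*(z - 1/2 - 6*(v:ℂ)*t)) z := by
  have h := (((((hasDerivAt_id z).sub_const (1/2)).sub_const (6*(v:ℂ)*t)).pow 2).const_mul
      (4:ℂ)).const_add 1 |>.add_const (16*(t:ℂ)^2)
  refine h.congr_deriv ?_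
  simp only [id_eq]
  ring

lemma dx1 (v x t : ℝ) :
    dx (φ₁ v) x t = Complex.exp (2*I*t) * (4*(1+4*I*t)) * (8*((x:ℂ) - 1/2 - 6*v*t))
      / (1 + 4*((x:ℂ) - 1/2 - 6*v*t)^2 + 16*(t:ℂ)^2)^2 := by
  have hD := Dne v x t
  have H : HasDerivAt (fun z : ℂ => Complex.exp (2 * I * t) *
      (1 - 4 * (1 + 4 * I * t) / (1 + 4*(z - 1/2 - 6*(v:ℂ)*t)^2 + 16*(t:ℂ)^2)))
      (Complex.exp (2*I*t) * (4*(1+4*I*t)) * (8*((x:ℂ) - 1/2 - 6*v*t))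
        / (1 + 4*((x:ℂ) - 1/2 - 6*v*t)^2 + 16*(t:ℂ)^2)^2) (x:ℂ) := by
    have h := (((hasDerivAt_const (x:ℂ) (4*(1+4*I*(t:ℂ)))).div (hP v t (x:ℂ)) hD).const_sub
      1).const_mul (Complex.exp (2*I*(t:ℂ)))
    refine h.congr_deriv ?_
    generalize hg : ((x:ℂ) - 1/2 - 6*(v:ℂ)*(t:ℂ)) = w at hD ⊢
    field_simp
    ring
  exact H.comp_ofReal.deriv

lemma dx2 (v x t : ℝ) :
    deriv (fun y : ℝ => Complex.exp (2*I*t) * (4*(1+4*I*t)) * (8*((y:ℂ) - 1/2 - 6*v*t))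
      / (1 + 4*((y:ℂ) - 1/2 - 6*v*t)^2 + 16*(t:ℂ)^2)^2) x
    = Complex.exp (2*I*t) * (4*(1+4*I*t))
        * (8*(1 + 4*((x:ℂ) - 1/2 - 6*v*t)^2 + 16*(t:ℂ)^2) - 128*((x:ℂ) - 1/2 - 6*v*t)^2)
      / (1 + 4*((x:ℂ) - 1/2 - 6*v*t)^2 + 16*(t:ℂ)^2)^3 := by
  have hD := Dne v x t
  have hnum : HasDerivAt (fun z : ℂ => Complex.exp (2*I*(t:ℂ)) * (4*(1+4*I*(t:ℂ))) * (8*(z - 1/2 - 6*(v:ℂ)*t)))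
      (Complex.exp (2*I*(t:ℂ)) * (4*(1+4*I*(t:ℂ))) * 8) (x:ℂ) := by
    have h := ((((hasDerivAt_id ((x:ℂ))).sub_const (1/2)).sub_const (6*(v:ℂ)*t)).const_mul
      (8:ℂ)).const_mul (Complex.exp (2*I*(t:ℂ)) * (4*(1+4*I*(t:ℂ))))
    refine h.congr_deriv ?_
    try simp only [id_eq]
    ring
  have hden := (hP v t (x:ℂ)).pow 2
  have H := hnum.div hden (pow_ne_zero 2 hD)
  have H2 : HasDerivAt (fun z : ℂ => Complex.exp (2*I*(t:ℂ)) * (4*(1+4*I*(t:ℂ))) * (8*(z - 1/2 - 6*(v:ℂ)*t))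
      / (1 + 4*(z - 1/2 - 6*(v:ℂ)*t)^2 + 16*(t:ℂ)^2)^2)
      (Complex.exp (2*I*t) * (4*(1+4*I*t))
        * (8*(1 + 4*((x:ℂ) - 1/2 - 6*v*t)^2 + 16*(t:ℂ)^2) - 128*((x:ℂ) - 1/2 - 6*v*t)^2)
      / (1 + 4*((x:ℂ) - 1/2 - 6*v*t)^2 + 16*(t:ℂ)^2)^3) (x:ℂ) := by
    refine H.congr_deriv ?_
    simp only [Pi.pow_apply, Nat.cast_ofNat, Nat.add_one_sub_one]
    generalize hg : ((x:ℂ) - 1/2 - 6*(v:ℂ)*(t:ℂ)) = w at hD ⊢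
    field_simp
    ring
  exact H2.comp_ofReal.deriv

lemma dx3 (v x t : ℝ) :
    deriv (fun y : ℝ => Complex.exp (2*I*t) * (4*(1+4*I*t))
        * (8*(1 + 4*((y:ℂ) - 1/2 - 6*v*t)^2 + 16*(t:ℂ)^2) - 128*((y:ℂ) - 1/2 - 6*v*t)^2)
      / (1 + 4*((y:ℂ) - 1/2 - 6*v*t)^2 + 16*(t:ℂ)^2)^3) x
    = Complex.exp (2*I*t) * (4*(1+4*I*t))
        * (-384*((x:ℂ) - 1/2 - 6*v*t)*(1 + 4*((x:ℂ) - 1/2 - 6*v*t)^2 + 16*(t:ℂ)^2)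
            + 3072*((x:ℂ) - 1/2 - 6*v*t)^3)
      / (1 + 4*((x:ℂ) - 1/2 - 6*v*t)^2 + 16*(t:ℂ)^2)^4 := by
  have hD := Dne v x t
  have hnum : HasDerivAt (fun z : ℂ => Complex.exp (2*I*(t:ℂ)) * (4*(1+4*I*(t:ℂ)))
      * (8*(1 + 4*(z - 1/2 - 6*(v:ℂ)*t)^2 + 16*(t:ℂ)^2) - 128*(z - 1/2 - 6*(v:ℂ)*t)^2))
      (Complex.exp (2*I*(t:ℂ)) * (4*(1+4*I*(t:ℂ))) * (-192*((x:ℂ) - 1/2 - 6*(v:ℂ)*t))) (x:ℂ) := by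
    have h := (((hP v t (x:ℂ)).const_mul (8:ℂ)).sub
      (((((hasDerivAt_id ((x:ℂ))).sub_const (1/2)).sub_const (6*(v:ℂ)*t)).pow 2).const_mul
        (128:ℂ))).const_mul (Complex.exp (2*I*(t:ℂ)) * (4*(1+4*I*(t:ℂ))))
    refine h.congr_deriv ?_
    try simp only [id_eq]
    ring
  have hden := (hP v t (x:ℂ)).pow 3
  have H := hnum.div hden (pow_ne_zero 3 hD)
  have H2 : HasDerivAt (fun z : ℂ => Complex.exp (2*I*(t:ℂ)) * (4*(1+4*I*(t:ℂ)))
      * (8*(1 + 4*(z - 1/2 - 6*(v:ℂ)*t)^2 + 16*(t:ℂ)^2) - 128*(z - 1/2 - 6*(v:ℂ)*t)^2)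
      / (1 + 4*(z - 1/2 - 6*(v:ℂ)*t)^2 + 16*(t:ℂ)^2)^3)
      (Complex.exp (2*I*t) * (4*(1+4*I*t))
        * (-384*((x:ℂ) - 1/2 - 6*v*t)*(1 + 4*((x:ℂ) - 1/2 - 6*v*t)^2 + 16*(t:ℂ)^2)
            + 3072*((x:ℂ) - 1/2 - 6*v*t)^3)
      / (1 + 4*((x:ℂ) - 1/2 - 6*v*t)^2 + 16*(t:ℂ)^2)^4) (x:ℂ) := by
    refine H.congr_deriv ?_
    simp only [Pi.pow_apply, Nat.cast_ofNat, Nat.add_one_sub_one]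
    generalize hg : ((x:ℂ) - 1/2 - 6*(v:ℂ)*(t:ℂ)) = w at hD ⊢
    field_simp
    ring
  exact H2.comp_ofReal.deriv

lemma dt1 (v x t : ℝ) :
    dt (φ₁ v) x t
      = (2*I*Complex.exp (2*I*t)
          * ((1 + 4*((x:ℂ) - 1/2 - 6*v*t)^2 + 16*(t:ℂ)^2) - 4*(1+4*I*t))
            * (1 + 4*((x:ℂ) - 1/2 - 6*v*t)^2 + 16*(t:ℂ)^2)
        - Complex.exp (2*I*t)
          * (16*I*(1 + 4*((x:ℂ) - 1/2 - 6*v*t)^2 + 16*(t:ℂ)^2)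
              - 4*(1+4*I*t)*(-48*(v:ℂ)*((x:ℂ) - 1/2 - 6*v*t) + 32*(t:ℂ))))
        / (1 + 4*((x:ℂ) - 1/2 - 6*v*t)^2 + 16*(t:ℂ)^2)^2 := by
  have hD := Dne v x t
  have hexp : HasDerivAt (fun z : ℂ => Complex.exp (2*I*z)) (Complex.exp (2*I*(t:ℂ)) * (2*I*1)) (t:ℂ) :=
    ((hasDerivAt_id (t:ℂ)).const_mul (2*I)).cexp
  have hnum : HasDerivAt (fun z : ℂ => 4*(1+4*I*z)) ((4:ℂ)*(4*I*1)) (t:ℂ) :=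
    (((hasDerivAt_id (t:ℂ)).const_mul (4*I)).const_add 1).const_mul 4
  have hlin : HasDerivAt (fun z : ℂ => (x:ℂ) - 1/2 - 6*(v:ℂ)*z) (-(6*(v:ℂ)*1)) (t:ℂ) :=
    ((hasDerivAt_id (t:ℂ)).const_mul (6*(v:ℂ))).const_sub ((x:ℂ) - 1/2)
  have hQ : HasDerivAt (fun z : ℂ => 1 + 4*((x:ℂ) - 1/2 - 6*(v:ℂ)*z)^2 + 16*z^2)
      ((4:ℂ)*(2*((x:ℂ) - 1/2 - 6*(v:ℂ)*t)^1*(-(6*(v:ℂ)*1))) + 16*(2*(t:ℂ)^1)) (t:ℂ) :=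
    (((hlin.pow 2).const_mul 4).const_add 1).add ((hasDerivAt_pow 2 (t:ℂ)).const_mul 16)
  have hfrac := (hnum.div hQ hD).const_sub 1
  have H := hexp.mul hfrac
  have H2 : HasDerivAt (fun z : ℂ => Complex.exp (2*I*z)
      * (1 - 4*(1+4*I*z)/(1 + 4*((x:ℂ) - 1/2 - 6*(v:ℂ)*z)^2 + 16*z^2)))
      ((2*I*Complex.exp (2*I*(t:ℂ))
          * ((1 + 4*((x:ℂ) - 1/2 - 6*(v:ℂ)*t)^2 + 16*(t:ℂ)^2) - 4*(1+4*I*(t:ℂ)))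
            * (1 + 4*((x:ℂ) - 1/2 - 6*(v:ℂ)*t)^2 + 16*(t:ℂ)^2)
        - Complex.exp (2*I*(t:ℂ))
          * (16*I*(1 + 4*((x:ℂ) - 1/2 - 6*(v:ℂ)*t)^2 + 16*(t:ℂ)^2)
              - 4*(1+4*I*(t:ℂ))*(-48*(v:ℂ)*((x:ℂ) - 1/2 - 6*(v:ℂ)*t) + 32*(t:ℂ))))
        / (1 + 4*((x:ℂ) - 1/2 - 6*(v:ℂ)*t)^2 + 16*(t:ℂ)^2)^2) (t:ℂ) := by
    refine H.congr_deriv ?_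
    try simp only [id_eq]
    simp only [Pi.div_apply]
    generalize hg : (1 + 4*((x:ℂ) - 1/2 - 6*(v:ℂ)*(t:ℂ))^2 + 16*(t:ℂ)^2) = Dv at hD ⊢
    field_simp
    ring
  exact H2.comp_ofReal.deriv

lemma habs (v x t : ℝ) :
    ((‖φ₁ v x t‖ : ℂ))^2
      = ((1 + 4*((x:ℂ) - 1/2 - 6*v*t)^2 + 16*(t:ℂ)^2) - 4*(1+4*I*t))
        * ((1 + 4*((x:ℂ) - 1/2 - 6*v*t)^2 + 16*(t:ℂ)^2) - 4*(1-4*I*t))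
        / (1 + 4*((x:ℂ) - 1/2 - 6*v*t)^2 + 16*(t:ℂ)^2)^2 := by
  have hD := Dne v x t
  have h1 : ‖φ₁ v x t‖
      = ‖1 - 4*(1+4*I*(t:ℂ))/(1 + 4*((x:ℂ) - 1/2 - 6*v*t)^2 + 16*(t:ℂ)^2)‖ := by
    simp only [φ₁, norm_mul]
    rw [show (2*I*(t:ℂ)) = ((2*t:ℝ):ℂ)*I by push_cast; ring, Complex.norm_exp_ofReal_mul_I, one_mul]
  rw [h1, ← Complex.ofReal_pow, Complex.sq_norm, ← Complex.mul_conj]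
  simp only [map_sub, map_one, map_div₀, map_mul, map_add, map_ofNat, map_pow,
    Complex.conj_I, Complex.conj_ofReal]
  generalize hg : (1 + 4*((x:ℂ) - 1/2 - 6*(v:ℂ)*(t:ℂ))^2 + 16*(t:ℂ)^2) = Dv at hD ⊢
  field_simp
  ring

lemma hirota_key (t w v : ℂ) :
    I * (2*I*((1+4*w^2+16*t^2) - 4*(1+4*I*t))*(1+4*w^2+16*t^2)^3
        - (16*I*(1+4*w^2+16*t^2) - 4*(1+4*I*t)*(-48*v*w+32*t))*(1+4*w^2+16*t^2)^2)
    + 4*(1+4*I*t)*(8*(1+4*w^2+16*t^2) - 128*w^2)*(1+4*w^2+16*t^2)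
    + 2*((1+4*w^2+16*t^2) - 4*(1+4*I*t))^2*((1+4*w^2+16*t^2) - 4*(1-4*I*t))*(1+4*w^2+16*t^2)
    + I*v*(4*(1+4*I*t))*(-384*w*(1+4*w^2+16*t^2) + 3072*w^3)
    + 48*I*v*(4*(1+4*I*t))*w*((1+4*w^2+16*t^2) - 4*(1+4*I*t))*((1+4*w^2+16*t^2) - 4*(1-4*I*t)) = 0 := by
  linear_combination ((-22:ℂ) + (-256:ℂ)*w^2 + (-960:ℂ)*w^4 + (-1024:ℂ)*w^6 + (512:ℂ)*w^8 + (1024:ℂ)*t^2 + (512:ℂ)*t^2*w^2 + (-12288:ℂ)*t^2*w^4 + (8192:ℂ)*t^2*w^6 + (17408:ℂ)*t^4 + (-49152:ℂ)*t^4*w^2 + (49152:ℂ)*t^4*w^4 + (-65536:ℂ)*t^6 + (131072:ℂ)*t^6*w^2 + (131072:ℂ)*t^8 + (-32:ℂ)*I*t + (-384:ℂ)*I*t*w^2 + (-1536:ℂ)*I*t*w^4 + (-2048:ℂ)*I*t*w^6 + (-49152:ℂ)*I*t^2*w*v + (6656:ℂ)*I*t^3 + (20480:ℂ)*I*t^3*w^2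 + (-24576:ℂ)*I*t^3*w^4 + (106496:ℂ)*I*t^5 + (-98304:ℂ)*I*t^5*w^2 + (-131072:ℂ)*I*t^7 + (-196608:ℂ)*I^2*t^3*w*v) * Complex.I_sq

/-- The first-order rogue wave `φ₁` satisfies the Hirota equation for every real `v`. -/
theorem rogueWave1_solves_hirota (v : ℝ) :
    ∀ x t : ℝ,
      I * dt (φ₁ v) x t + dx (dx (φ₁ v)) x t
        + 2 * (‖φ₁ v x t‖ : ℂ)^2 * φ₁ v x t
        + I * v * dx (dx (dx (φ₁ v))) x t
        + 6 * I * v * (‖φ₁ v x t‖ : ℂ)^2 * dx (φ₁ v) x t = 0 := by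
  intro x t
  have hD := Dne v x t
  have h12 : (fun y : ℝ => dx (φ₁ v) y t)
      = (fun y : ℝ => Complex.exp (2*I*t) * (4*(1+4*I*t)) * (8*((y:ℂ) - 1/2 - 6*v*t))
          / (1 + 4*((y:ℂ) - 1/2 - 6*v*t)^2 + 16*(t:ℂ)^2)^2) :=
    funext fun y => dx1 v y t
  have e2 : ∀ y : ℝ, dx (dx (φ₁ v)) y t
      = Complex.exp (2*I*t) * (4*(1+4*I*t))
          * (8*(1 + 4*((y:ℂ) - 1/2 - 6*v*t)^2 + 16*(t:ℂ)^2) - 128*((y:ℂ) - 1/2 - 6*v*t)^2)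
        / (1 + 4*((y:ℂ) - 1/2 - 6*v*t)^2 + 16*(t:ℂ)^2)^3 := by
    intro y
    show deriv (fun y' : ℝ => dx (φ₁ v) y' t) y = _
    rw [h12]
    exact dx2 v y t
  have e3 : dx (dx (dx (φ₁ v))) x t
      = Complex.exp (2*I*t) * (4*(1+4*I*t))
          * (-384*((x:ℂ) - 1/2 - 6*v*t)*(1 + 4*((x:ℂ) - 1/2 - 6*v*t)^2 + 16*(t:ℂ)^2)
              + 3072*((x:ℂ) - 1/2 - 6*v*t)^3)
        / (1 + 4*((x:ℂ) - 1/2 - 6*v*t)^2 + 16*(t:ℂ)^2)^4 := by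
    show deriv (fun y : ℝ => dx (dx (φ₁ v)) y t) x = _
    rw [funext e2]
    exact dx3 v x t
  have hφ : φ₁ v x t = Complex.exp (2*I*(t:ℂ))
      * (1 - 4*(1+4*I*(t:ℂ))/(1 + 4*((x:ℂ) - 1/2 - 6*(v:ℂ)*t)^2 + 16*(t:ℂ)^2)) := rfl
  rw [dt1 v x t, e2 x, e3, habs v x t, hφ, dx1 v x t]
  have k := hirota_key (t:ℂ) ((x:ℂ) - 1/2 - 6*(v:ℂ)*(t:ℂ)) (v:ℂ)
  generalize hg : ((x:ℂ) - 1/2 - 6*(v:ℂ)*(t:ℂ)) = w at hD k ⊢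
  generalize hg2 : (1 + 4*w^2 + 16*(t:ℂ)^2 : ℂ) = Dv at hD k ⊢
  have G1 : I * ((2*I*Complex.exp (2*I*(t:ℂ)) * (Dv - 4*(1+4*I*(t:ℂ))) * Dv
        - Complex.exp (2*I*(t:ℂ)) * (16*I*Dv
            - 4*(1+4*I*(t:ℂ))*(-48*(v:ℂ)*w + 32*(t:ℂ)))) / Dv^2)
      = Complex.exp (2*I*(t:ℂ)) * (I*(2*I*(Dv - 4*(1+4*I*(t:ℂ)))*Dv^3
          - (16*I*Dv - 4*(1+4*I*(t:ℂ))*(-48*(v:ℂ)*w + 32*(t:ℂ)))*Dv^2)) / Dv^4 := by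
    field_simp
  have G2 : Complex.exp (2*I*(t:ℂ)) * (4*(1+4*I*(t:ℂ))) * (8*Dv - 128*w^2) / Dv^3
      = Complex.exp (2*I*(t:ℂ)) * (4*(1+4*I*(t:ℂ))*(8*Dv - 128*w^2)*Dv) / Dv^4 := by
    field_simp
  have G3 : 2 * ((Dv - 4*(1+4*I*(t:ℂ))) * (Dv - 4*(1-4*I*(t:ℂ))) / Dv^2)
        * (Complex.exp (2*I*(t:ℂ)) * (1 - 4*(1+4*I*(t:ℂ))/Dv))
      = Complex.exp (2*I*(t:ℂ)) * (2*(Dv - 4*(1+4*I*(t:ℂ)))^2*(Dv - 4*(1-4*I*(t:ℂ)))*Dv) / Dv^4 := by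
    field_simp
  have G4 : I * (v:ℂ) * (Complex.exp (2*I*(t:ℂ)) * (4*(1+4*I*(t:ℂ)))
        * (-384*w*Dv + 3072*w^3) / Dv^4)
      = Complex.exp (2*I*(t:ℂ)) * (I*(v:ℂ)*(4*(1+4*I*(t:ℂ)))*(-384*w*Dv + 3072*w^3)) / Dv^4 := by
    field_simp
  have G5 : 6 * I * (v:ℂ) * ((Dv - 4*(1+4*I*(t:ℂ))) * (Dv - 4*(1-4*I*(t:ℂ))) / Dv^2)
        * (Complex.exp (2*I*(t:ℂ)) * (4*(1+4*I*(t:ℂ))) * (8*w) / Dv^2)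
      = Complex.exp (2*I*(t:ℂ)) * (48*I*(v:ℂ)*(4*(1+4*I*(t:ℂ)))*w
          *(Dv - 4*(1+4*I*(t:ℂ)))*(Dv - 4*(1-4*I*(t:ℂ)))) / Dv^4 := by
    field_simp
    ring
  rw [G1, G2, G3, G4, G5, ← add_div, ← add_div, ← add_div,
    ← add_div, div_eq_zero_iff]
  left
  linear_combination Complex.exp (2*I*(t:ℂ)) * k
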